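/- Let κ > 1 and define λ_{k+1} = (1 - λ_k²/κ + √((1 - λ_k²/κ)² + 4λ_k²))/2 with λ_1 ∈ (1, √κ]. Then {λ_k} is monotonically nondecreasing. -/

import Mathlib

lemma lambda_step (κ : ℝ) (hκ : 1 < κ) (l : ℝ) (hl1 : 1 < l) (hl2 : l ≤ Real.sqrt κ) :
    l ≤ (1 - l ^ 2 / κ + Real.sqrt ((1 - l ^ 2 / κ) ^ 2 + 4 * l ^ 2)) / 2 ∧
    (1 - l ^ 2 / κ + Real.sqrt ((1 - l ^ 2 / κ) ^ 2 + 4 * l ^ 2)) / 2 ≤ Real.sqrt κ := by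
  have hκ0 : (0:ℝ) < κ := by linarith
  have hs : Real.sqrt κ ^ 2 = κ := Real.sq_sqrt hκ0.le
  have hs1 : 1 < Real.sqrt κ := lt_of_lt_of_le hl1 hl2
  have hl0 : 0 < l := by linarith
  have hlκ : l ^ 2 ≤ κ := by nlinarith
  set a := 1 - l ^ 2 / κ with ha
  clear_value a
  have ha0 : 0 ≤ a := by
    have : l ^ 2 / κ ≤ 1 := by rw [div_le_one hκ0]; exact hlκ
    linarith
  constructor
  · -- l ≤ next  ⟺  2l - a ≤ sqrt(a² + 4l²)
    have key : 2 * l - a ≤ Real.sqrt (a ^ 2 + 4 * l ^ 2) := by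
      have h1 : (2 * l - a) ^ 2 ≤ a ^ 2 + 4 * l ^ 2 := by nlinarith
      calc 2 * l - a ≤ |2 * l - a| := le_abs_self _
        _ = Real.sqrt ((2 * l - a) ^ 2) := (Real.sqrt_sq_eq_abs _).symm
        _ ≤ Real.sqrt (a ^ 2 + 4 * l ^ 2) := Real.sqrt_le_sqrt h1
    linarith
  · -- next ≤ √κ  ⟺  sqrt(a² + 4l²) ≤ 2√κ - a
    have key : Real.sqrt (a ^ 2 + 4 * l ^ 2) ≤ 2 * Real.sqrt κ - a := by
      have hrhs : 0 ≤ 2 * Real.sqrt κ - a := by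
        have h : 0 ≤ l ^ 2 / κ := div_nonneg (sq_nonneg l) hκ0.le
        linarith
      have h1 : a ^ 2 + 4 * l ^ 2 ≤ (2 * Real.sqrt κ - a) ^ 2 := by
        have : κ * a = κ - l ^ 2 := by rw [ha, mul_sub, mul_one, mul_div_assoc', mul_comm κ (l ^ 2), mul_div_assoc, div_self hκ0.ne', mul_one]
        nlinarith [sq_nonneg (Real.sqrt κ - 1), sq_nonneg (Real.sqrt κ * l - κ)]
      calc Real.sqrt (a ^ 2 + 4 * l ^ 2) ≤ Real.sqrt ((2 * Real.sqrt κ - a) ^ 2) :=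
            Real.sqrt_le_sqrt h1
        _ = 2 * Real.sqrt κ - a := Real.sqrt_sq hrhs
    linarith

theorem lambda_monotone (κ : ℝ) (hκ : 1 < κ) (lam : ℕ → ℝ)
    (hinit : 1 < lam 1 ∧ lam 1 ≤ Real.sqrt κ)
    (hrec : ∀ k ≥ 1, lam (k + 1) =
      (1 - (lam k) ^ 2 / κ + Real.sqrt ((1 - (lam k) ^ 2 / κ) ^ 2 + 4 * (lam k) ^ 2)) / 2) :
    ∀ k ≥ 1, lam k ≤ lam (k + 1) := by
  have main : ∀ k ≥ 1, (1 < lam k ∧ lam k ≤ Real.sqrt κ) ∧ lam k ≤ lam (k + 1) := by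
    intro k hk
    induction k with
    | zero => omega
    | succ n ih =>
      rcases Nat.eq_or_lt_of_le hk with h | h
      · have h1 : n + 1 = 1 := h.symm
        rw [h1]
        refine ⟨hinit, ?_⟩
        rw [hrec 1 le_rfl]
        exact (lambda_step κ hκ (lam 1) hinit.1 hinit.2).1
      · have hn : n ≥ 1 := by omega
        obtain ⟨⟨hn1, hn2⟩, hmono⟩ := ih hn
        have hrecn := hrec n hn
        have step := lambda_step κ hκ (lam n) hn1 hn2
        have h1 : 1 < lam (n + 1) := by linarith
        have h2 : lam (n + 1) ≤ Real.sqrt κ := by rw [hrecn]; exact step.2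
        refine ⟨⟨h1, h2⟩, ?_⟩
        rw [hrec (n + 1) (by omega)]
        exact (lambda_step κ hκ (lam (n + 1)) h1 h2).1
  exact fun k hk => (main k hk).2
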